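/- Let f be a function on the cells of a finite regular CW complex and V a discrete gradient vector field. Then f is a discrete pseudo-Morse function consistent with V if and only if for every ε>0 there exists a discrete Morse function f_ε with ‖f_ε − f‖_∞ ≤ ε whose gradient vector field is V. -/

import Mathlib

open Classical

variable {Cell : Type}

/-- A discrete vector field: a set of pairs (σ,τ) with σ a facet of τ,
each cell occurring in at most one pair. -/
def IsVectorField (facet : Cell → Cell → Prop) (V : Set (Cell × Cell)) : Prop :=
  (∀ p ∈ V, facet p.1 p.2) ∧
  ∀ p ∈ V, ∀ q ∈ V, (p.1 = q.1 ∨ p.1 = q.2 ∨ p.2 = q.1 ∨ p.2 = q.2) → p = q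

/-- The covering relation ←_V : `covRel facet V x y` means x ←_V y. -/
def covRel (facet : Cell → Cell → Prop) (V : Set (Cell × Cell)) (x y : Cell) : Prop :=
  (facet x y ∧ (x, y) ∉ V) ∨ (y, x) ∈ V

/-- The strict partial order ≺_V induced by V: transitive closure of ←_V. -/
def indOrder (facet : Cell → Cell → Prop) (V : Set (Cell × Cell)) : Cell → Cell → Prop :=
  Relation.TransGen (covRel facet V)

/-- The reflexive closure ⪯_V of ≺_V. -/
def indOrderLe (facet : Cell → Cell → Prop) (V : Set (Cell × Cell)) : Cell → Cell → Prop :=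
  Relation.ReflTransGen (covRel facet V)

/-- A V-path (σ₀,τ₀,σ₁,…,τ_{r-1},σ_r), encoded by its first cell σ₀ and the
list of pairs (τ_i, σ_{i+1}). -/
def IsVPath (facet : Cell → Cell → Prop) (V : Set (Cell × Cell)) :
    Cell → List (Cell × Cell) → Prop
  | _, [] => True
  | σ, (τ, σ') :: rest => (σ, τ) ∈ V ∧ facet σ' τ ∧ (σ', τ) ∉ V ∧ IsVPath facet V σ' rest

/-- The last cell σ_r of a V-path. -/
def pathLast (σ : Cell) (l : List (Cell × Cell)) : Cell :=
  (l.getLast?.map Prod.snd).getD σ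

/-- No nontrivial closed V-paths. -/
def NoClosedVPath (facet : Cell → Cell → Prop) (V : Set (Cell × Cell)) : Prop :=
  ∀ σ (l : List (Cell × Cell)), IsVPath facet V σ l → l ≠ [] → pathLast σ l ≠ σ

/-- A discrete gradient vector field. -/
def IsGradient (facet : Cell → Cell → Prop) (V : Set (Cell × Cell)) : Prop :=
  IsVectorField facet V ∧ NoClosedVPath facet V

/-- A cell is critical if it belongs to no pair of V. -/
def IsCritical (V : Set (Cell × Cell)) (x : Cell) : Prop :=
  ∀ p ∈ V, p.1 ≠ x ∧ p.2 ≠ x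

/-- f is a discrete Morse function with gradient vector field V. -/
def IsMorse (facet : Cell → Cell → Prop) (V : Set (Cell × Cell)) (f : Cell → ℝ) : Prop :=
  ∀ σ τ, facet σ τ → (((σ, τ) ∉ V → f σ < f τ) ∧ ((σ, τ) ∈ V → f τ ≤ f σ))

/-- f is a discrete pseudo-Morse function consistent with V. -/
def IsPseudoMorse (facet : Cell → Cell → Prop) (V : Set (Cell × Cell)) (f : Cell → ℝ) : Prop :=
  ∀ σ τ, facet σ τ → (((σ, τ) ∉ V → f σ ≤ f τ) ∧ ((σ, τ) ∈ V → f τ ≤ f σ))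

/-- The pairs (σ_i, τ_i) of a V-path given by σ₀ and l = [(τ₀,σ₁),…]. -/
def oldPairs (σ0 : Cell) (l : List (Cell × Cell)) : List (Cell × Cell) :=
  List.zip (σ0 :: l.map Prod.snd) (l.map Prod.fst)

/-- The reversed pairs (σ_{i+1}, τ_i) of a V-path. -/
def newPairs (l : List (Cell × Cell)) : List (Cell × Cell) :=
  l.map (fun p => (p.2, p.1))

/-- Reversal of V along the V-path from σ₀ ∈ ∂ρ given by l (Forman cancelation). -/
def reverseField (V : Set (Cell × Cell)) (ρ σ0 : Cell) (l : List (Cell × Cell)) :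
    Set (Cell × Cell) :=
  (V \ {p : Cell × Cell | p ∈ oldPairs σ0 l}) ∪ {p : Cell × Cell | p ∈ newPairs l} ∪ {(σ0, ρ)}

/-- A combinatorial surface (closed): facets raise dimension by one, dimensions are ≤ 2,
every 1-cell has exactly two boundary 0-cells and is a facet of exactly two 2-cells. -/
def IsCombSurface (dim : Cell → ℕ) (facet : Cell → Cell → Prop) : Prop :=
  (∀ σ τ, facet σ τ → dim τ = dim σ + 1) ∧
  (∀ x, dim x ≤ 2) ∧
  (∀ τ, dim τ = 1 → ∃ a b, a ≠ b ∧ ∀ x, facet x τ ↔ (x = a ∨ x = b)) ∧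
  (∀ τ, dim τ = 1 → ∃ A B, A ≠ B ∧ ∀ X, facet τ X ↔ (X = A ∨ X = B))

section Aux

variable {Cell : Type} {facet : Cell → Cell → Prop} {V : Set (Cell × Cell)}

lemma pathLast_cons (l : List (Cell × Cell)) :
    ∀ (p : Cell × Cell) (σ : Cell), pathLast σ (p :: l) = pathLast p.2 l := by
  induction l with
  | nil => intro p σ; rfl
  | cons q l ih =>
    intro p σ
    have h1 : pathLast σ (p :: q :: l) = pathLast σ (q :: l) := by
      simp [pathLast, List.getLast?_cons_cons]
    rw [h1, ih q σ, ih q p.2]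

lemma pathLast_concat (σ : Cell) (l : List (Cell × Cell)) (w z : Cell) :
    pathLast σ (l ++ [(w, z)]) = z := by
  simp [pathLast, List.getLast?_concat]

lemma vpath_snoc (l : List (Cell × Cell)) :
    ∀ (σ w z : Cell), IsVPath facet V σ l → (pathLast σ l, w) ∈ V → facet z w →
      (z, w) ∉ V → IsVPath facet V σ (l ++ [(w, z)]) := by
  induction l with
  | nil => intro σ w z _ h1 h2 h3; exact ⟨h1, h2, h3, trivial⟩
  | cons p l ih =>
    intro σ w z hp h1 h2 h3
    obtain ⟨τ', σ'⟩ := p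
    obtain ⟨ha, hb, hc, hd⟩ := hp
    exact ⟨ha, hb, hc, ih σ' w z hd (by rwa [pathLast_cons] at h1) h2 h3⟩

lemma key_lemma (dim : Cell → ℕ) (hdim : ∀ σ τ, facet σ τ → dim τ = dim σ + 1)
    (hVF : IsVectorField facet V) (τ0 : Cell)
    (hmax : ∀ z, Relation.TransGen (covRel facet V) z z → dim z ≤ dim τ0) :
    ∀ n (l : List Cell) (t : Cell), l.length ≤ n →
      dim t = dim τ0 →
      Relation.TransGen (covRel facet V) τ0 t →
      List.Chain (covRel facet V) t l →
      (t :: l).getLast (List.cons_ne_nil _ _) = τ0 →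
      l ≠ [] →
      ∃ σ pl, IsVPath facet V σ pl ∧ facet σ τ0 ∧ (σ, τ0) ∉ V ∧
        (pathLast σ pl, t) ∈ V := by
  intro n
  induction n with
  | zero =>
    intro l t hlen _ _ _ _ hne
    cases l with
    | nil => exact absurd rfl hne
    | cons => simp at hlen
  | succ n ih =>
    intro l t hlen hdimt hτt hchain hlast hne
    cases l with
    | nil => exact absurd rfl hne
    | cons z l' =>
      cases hchain with
      | cons_cons htz hchain' =>
        rw [List.getLast_cons_cons] at hlast
        rcases htz with ⟨hftz, hnv⟩ | hzt
        · -- up step from t : dim z = dim τ0 + 1, contradiction with maximality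
          exfalso
          have h1 : Relation.ReflTransGen (covRel facet V) z τ0 :=
            List.relationReflTransGen_of_exists_isChain_cons l' hchain' hlast
          have hzcyc : Relation.TransGen (covRel facet V) z z :=
            Relation.TransGen.tail' (h1.trans hτt.to_reflTransGen) (Or.inl ⟨hftz, hnv⟩)
          have h2 := hmax z hzcyc
          have h3 := hdim t z hftz
          omega
        · -- down step : (z, t) ∈ V
          have hfzt : facet z t := hVF.1 (z, t) hzt
          have hdz : dim z + 1 = dim τ0 := by
            rw [← hdimt]; exact (hdim z t hfzt).symm
          cases l' with
          | nil =>
            exfalso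
            have hzτ : z = τ0 := hlast
            subst hzτ
            omega
          | cons w l'' =>
            cases hchain' with
            | cons_cons hzw hchain'' =>
              rw [List.getLast_cons_cons] at hlast
              rcases hzw with ⟨hfzw, hnvzw⟩ | hwz
              · -- up step z → w
                have hdw : dim w = dim τ0 := by rw [hdim z w hfzw]; omega
                by_cases hwτ : w = τ0
                · subst hwτ
                  exact ⟨z, [], trivial, hfzw, hnvzw, hzt⟩
                · have hne'' : l'' ≠ [] := by
                    intro h
                    subst h
                    exact hwτ hlast
                  have hτw : Relation.TransGen (covRel facet V) τ0 w :=
                    (hτt.tail (Or.inr hzt)).tail (Or.inl ⟨hfzw, hnvzw⟩)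
                  obtain ⟨σ, pl, hp, hfστ, hnστ, hlastw⟩ :=
                    ih l'' w (by simp at hlen; omega) hdw hτw hchain'' hlast hne''
                  refine ⟨σ, pl ++ [(w, z)], ?_, hfστ, hnστ, ?_⟩
                  · exact vpath_snoc pl σ w z hp hlastw hfzw hnvzw
                  · rw [pathLast_concat]; exact hzt
              · -- two consecutive down steps : matching contradiction
                exfalso
                have heq := hVF.2 (w, z) hwz (z, t) hzt (Or.inr (Or.inr (Or.inl rfl)))
                have hzt' : z = t := congrArg Prod.snd heq
                subst hzt'
                have := hdim z z hfzt
                omega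

lemma acyclic [Fintype Cell] (dim : Cell → ℕ)
    (hdim : ∀ σ τ, facet σ τ → dim τ = dim σ + 1)
    (hV : IsGradient facet V) :
    ∀ x, ¬ Relation.TransGen (covRel facet V) x x := by
  by_contra h
  push_neg at h
  obtain ⟨x, hx⟩ := h
  classical
  obtain ⟨τ0, hmem, hmax'⟩ := Finset.exists_max_image
    (Finset.univ.filter fun z => Relation.TransGen (covRel facet V) z z) dim
    ⟨x, by simp [hx]⟩
  simp only [Finset.mem_filter, Finset.mem_univ, true_and] at hmem
  have hmax : ∀ z, Relation.TransGen (covRel facet V) z z → dim z ≤ dim τ0 := by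
    intro z hz
    exact hmax' z (by simp [hz])
  -- decompose the cycle at τ0 into a nonempty chain
  obtain ⟨b, hτb, hbτ⟩ : ∃ b, covRel facet V τ0 b ∧
      Relation.ReflTransGen (covRel facet V) b τ0 := by
    have : ∀ c, Relation.TransGen (covRel facet V) τ0 c →
        ∃ b, covRel facet V τ0 b ∧ Relation.ReflTransGen (covRel facet V) b c := by
      intro c hc
      induction hc with
      | single h => exact ⟨_, h, Relation.ReflTransGen.refl⟩
      | tail h1 h2 ih =>
        obtain ⟨b, hb, hbc⟩ := ih
        exact ⟨b, hb, hbc.tail h2⟩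
    exact this τ0 hmem
  obtain ⟨l, hl, hlast⟩ := List.exists_isChain_cons_of_relationReflTransGen hbτ
  obtain ⟨σ, pl, hp, hfστ, hnστ, hlastτ⟩ :=
    key_lemma dim hdim hV.1 τ0 hmax (b :: l).length (b :: l) τ0 le_rfl rfl hmem
      (List.IsChain.cons_cons hτb hl) (by rw [List.getLast_cons_cons]; exact hlast)
      (List.cons_ne_nil _ _)
  -- assemble the closed V-path
  have hclosed : IsVPath facet V (pathLast σ pl) ((τ0, σ) :: pl) :=
    ⟨hlastτ, hfστ, hnστ, hp⟩
  have hlast2 : pathLast (pathLast σ pl) ((τ0, σ) :: pl) = pathLast σ pl :=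
    pathLast_cons pl (τ0, σ) (pathLast σ pl)
  exact hV.2 (pathLast σ pl) ((τ0, σ) :: pl) hclosed (List.cons_ne_nil _ _) hlast2

/-- counting function: number of cells weakly below `x` in the induced order. -/
noncomputable def gfun (facet : Cell → Cell → Prop) (V : Set (Cell × Cell)) (x : Cell) : ℕ :=
  {z | Relation.ReflTransGen (covRel facet V) z x}.ncard

lemma gfun_lt [Fintype Cell] (hacyc : ∀ x, ¬ Relation.TransGen (covRel facet V) x x)
    {x y : Cell} (h : covRel facet V x y) : gfun facet V x < gfun facet V y := by
  apply Set.ncard_lt_ncard _ (Set.toFinite _)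
  rw [Set.ssubset_def]
  constructor
  · intro z hz
    exact Relation.ReflTransGen.tail hz h
  · intro hsup
    have hyx : Relation.ReflTransGen (covRel facet V) y x := hsup Relation.ReflTransGen.refl
    exact hacyc y (Relation.TransGen.tail' hyx h)

lemma gfun_le_card [Fintype Cell] (x : Cell) :
    gfun facet V x ≤ Fintype.card Cell := by
  have := Set.ncard_le_ncard (Set.subset_univ
    {z | Relation.ReflTransGen (covRel facet V) z x}) (Set.toFinite _)
  rwa [Set.ncard_univ, Nat.card_eq_fintype_card] at this

end Aux

/-- f is pseudo-Morse consistent with the gradient vector field V iff for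
every ε > 0 there is a discrete Morse function f_ε with ‖f_ε − f‖_∞ ≤ ε whose gradient
vector field is V. -/
theorem stmt1 [Fintype Cell] (dim : Cell → ℕ) (facet : Cell → Cell → Prop)
    (hdim : ∀ σ τ, facet σ τ → dim τ = dim σ + 1)
    (V : Set (Cell × Cell)) (hV : IsGradient facet V) (f : Cell → ℝ) :
    IsPseudoMorse facet V f ↔
      ∀ ε : ℝ, 0 < ε → ∃ fε : Cell → ℝ, IsMorse facet V fε ∧ ∀ x, |fε x - f x| ≤ ε := by
  constructor
  · -- forward: perturb f by a small multiple of a Morse function for V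
    intro hpm ε hε
    have hacyc := acyclic dim hdim hV
    set N : ℝ := (Fintype.card Cell : ℝ) with hN
    have hN0 : 0 ≤ N := by positivity
    set δ : ℝ := ε / (N + 1) with hδ
    have hδ0 : 0 < δ := by positivity
    refine ⟨fun x => f x + δ * (gfun facet V x : ℝ), ?_, ?_⟩
    · intro σ τ hfστ
      dsimp only
      constructor
      · intro hnv
        have h1 : (f σ ≤ f τ) := (hpm σ τ hfστ).1 hnv
        have h2 : gfun facet V σ < gfun facet V τ :=
          gfun_lt hacyc (Or.inl ⟨hfστ, hnv⟩)
        have h3 : (gfun facet V σ : ℝ) < (gfun facet V τ : ℝ) := by exact_mod_cast h2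
        nlinarith
      · intro hv
        have h1 : (f τ ≤ f σ) := (hpm σ τ hfστ).2 hv
        have h2 : gfun facet V τ < gfun facet V σ :=
          gfun_lt hacyc (Or.inr hv)
        have h3 : (gfun facet V τ : ℝ) < (gfun facet V σ : ℝ) := by exact_mod_cast h2
        nlinarith
    · intro x
      dsimp only
      have h1 : (0:ℝ) ≤ (gfun facet V x : ℝ) := by positivity
      have h2 : (gfun facet V x : ℝ) ≤ N := by
        rw [hN]; exact_mod_cast gfun_le_card x
      have h3 : δ * (gfun facet V x : ℝ) ≤ δ * N := by nlinarith
      have h4 : δ * N ≤ ε := by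
        rw [hδ, div_mul_eq_mul_div, div_le_iff₀ (by positivity)]
        nlinarith
      rw [abs_le]
      constructor <;> nlinarith
  · -- backward: approximation by Morse functions forces the weak inequalities
    intro h σ τ hfστ
    have key : ∀ (P : Prop), (∀ g : Cell → ℝ, IsMorse facet V g → P) → P := by
      intro P hP
      obtain ⟨g, hg, _⟩ := h 1 one_pos
      exact hP g hg
    constructor
    · intro hnv
      by_contra hlt
      push_neg at hlt
      obtain ⟨g, hg, hb⟩ := h ((f σ - f τ) / 3) (by linarith)
      have h1 := (hg σ τ hfστ).1 hnv
      have h2 := hb σ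
      have h3 := hb τ
      rw [abs_le] at h2 h3
      linarith [h2.1, h2.2, h3.1, h3.2]
    · intro hv
      by_contra hlt
      push_neg at hlt
      obtain ⟨g, hg, hb⟩ := h ((f τ - f σ) / 3) (by linarith)
      have h1 := (hg σ τ hfστ).2 hv
      have h2 := hb σ
      have h3 := hb τ
      rw [abs_le] at h2 h3
      linarith [h2.1, h2.2, h3.1, h3.2]
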